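/- For integers $0 \le t \le k-1$, as $x \to 1^+$ one has $Q_{k,t}(x) = \log\left(\frac{x+1}{x-1}\right) - \left(\psi(k+t) - \psi(1) + \psi(k-t) - \psi(1)\right) + o(1)$, where $\psi = \Gamma'/\Gamma$ is the digamma function. -/

import Mathlib

open MeasureTheory

/-- `Q_{k,t}(x) = 2^{-k+t+1} ∫_{-1}^1 (1+u)^{k-t-1}(1-u)^{k+t-1}/(x-u)^{k+t} du`, for `x > 1`. -/
noncomputable def Qkt (k t : ℕ) (x : ℝ) : ℝ :=
  (2 : ℝ) ^ ((t : ℤ) + 1 - (k : ℤ)) *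
    ∫ u in (-1 : ℝ)..1, (1 + u) ^ (k - t - 1) * (1 - u) ^ (k + t - 1) / (x - u) ^ (k + t)

namespace S6

open Filter Real Finset intervalIntegral

noncomputable def cf (a b i j : ℕ) (x : ℝ) : ℝ :=
  (a.choose i : ℝ) * b.choose j * (-1) ^ i * (1 + x) ^ (a - i) * (1 - x) ^ (b - j)

noncomputable def gf (b i j : ℕ) (x : ℝ) : ℝ :=
  if (i : ℤ) + j - b = 0 then Real.log ((x + 1) / (x - 1))
  else ((x + 1) ^ ((i : ℤ) + j - b) - (x - 1) ^ ((i : ℤ) + j - b)) / (((i : ℤ) + j - b : ℤ) : ℝ)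

noncomputable def L (a b i j : ℕ) : ℝ :=
  if j = b ∧ i ≠ 0 then (-1 : ℝ) ^ i * a.choose i / i
  else if i = 0 ∧ j ≠ b then (-1 : ℝ) ^ (b - j) * b.choose j / ((b - j : ℕ) : ℝ)
  else 0

lemma elem_int {x : ℝ} (hx : 1 < x) (m : ℤ) :
    ∫ u in (-1 : ℝ)..1, (x - u) ^ m =
      if m + 1 = 0 then Real.log ((x + 1) / (x - 1))
      else ((x + 1) ^ (m + 1) - (x - 1) ^ (m + 1)) / (m + 1) := by
  have h0 : (∫ u in (-1 : ℝ)..1, (x - u) ^ m) = ∫ v in (x - 1)..(x + 1), v ^ m := by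
    have := intervalIntegral.integral_comp_sub_left (a := (-1 : ℝ)) (b := 1)
      (fun v : ℝ => v ^ m) x
    simpa using this
  have hmem : (0 : ℝ) ∉ Set.uIcc (x - 1) (x + 1) := by
    rw [Set.uIcc_of_le (by linarith)]
    intro h
    exact absurd h.1 (by simp; linarith)
  rw [h0]
  by_cases hm : m + 1 = 0
  · have : m = -1 := by omega
    subst this
    simp only [hm, if_true]
    rw [show ((-1 : ℤ)) = -1 from rfl]
    have : (fun v : ℝ => v ^ (-1 : ℤ)) = fun v : ℝ => v⁻¹ := by
      funext v; simp [zpow_neg_one]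
    rw [this, integral_inv hmem]
  · rw [if_neg hm]
    rw [integral_zpow (Or.inr ⟨by omega, hmem⟩)]


lemma tendsto_sub_log :
    Tendsto (fun x : ℝ => (x - 1) * Real.log ((x + 1) / (x - 1)))
      (nhdsWithin 1 (Set.Ioi 1)) (nhds 0) := by
  have h1 : Tendsto (fun x : ℝ => x - 1) (nhdsWithin 1 (Set.Ioi 1))
      (nhdsWithin 0 (Set.Ioi 0)) := by
    apply tendsto_nhdsWithin_of_tendsto_nhds_of_eventually_within
    · simpa using ((continuous_sub_right (1 : ℝ)).tendsto 1).mono_left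
        (nhdsWithin_le_nhds (s := Set.Ioi (1:ℝ)))
    · filter_upwards [self_mem_nhdsWithin] with x hx
      exact sub_pos.mpr (Set.mem_Ioi.mp hx)
  have h2 : Tendsto (fun y : ℝ => Real.log y * y) (nhdsWithin 0 (Set.Ioi 0)) (nhds 0) := by
    simpa using tendsto_log_mul_rpow_nhdsGT_zero zero_lt_one
  have h3 : Tendsto (fun x : ℝ => Real.log (x - 1) * (x - 1))
      (nhdsWithin 1 (Set.Ioi 1)) (nhds 0) := h2.comp h1
  have h4 : Tendsto (fun x : ℝ => (x - 1) * Real.log (x + 1))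
      (nhdsWithin 1 (Set.Ioi 1)) (nhds 0) := by
    have : Tendsto (fun x : ℝ => (x - 1) * Real.log (x + 1)) (nhds 1)
        (nhds ((1 - 1) * Real.log (1 + 1))) := by
      exact (Filter.Tendsto.mul ((continuous_id.sub continuous_const).tendsto 1)
        ((Real.continuousAt_log (by norm_num)).tendsto.comp
          ((continuous_id.add continuous_const).tendsto 1)))
    simpa using this.mono_left nhdsWithin_le_nhds
  have := h4.sub h3
  rw [sub_zero] at this
  apply this.congr'
  filter_upwards [self_mem_nhdsWithin] with x hx
  rw [Real.log_div (by simp at hx ⊢; linarith) (by simp at hx ⊢; linarith)]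
  ring


lemma key1 (n : ℕ) (hn : n ≠ 0) :
    Tendsto (fun x : ℝ => (1 - x) ^ n * Real.log ((x + 1) / (x - 1)))
      (nhdsWithin 1 (Set.Ioi 1)) (nhds 0) := by
  obtain ⟨m, rfl⟩ : ∃ m, n = m + 1 := ⟨n - 1, by omega⟩
  have hA : Tendsto (fun x : ℝ => (1 - x) ^ m) (nhdsWithin 1 (Set.Ioi 1))
      (nhds ((1 - 1 : ℝ) ^ m)) :=
    (((continuous_const.sub continuous_id).pow m).tendsto 1).mono_left nhdsWithin_le_nhds
  have := hA.mul tendsto_sub_log.neg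
  rw [neg_zero, mul_zero] at this
  apply this.congr (fun x => ?_)
  ring


lemma halt (n : ℕ) :
    ∑ i ∈ range (n + 1), (-1 : ℝ) ^ i * n.choose i / i = -∑ j ∈ Finset.Icc 1 n, (1 : ℝ) / j := by
  induction n with
  | zero => simp
  | succ n ih =>
    have hstep : ∀ i : ℕ, ((n.choose i : ℝ)) / ((i + 1 : ℕ) : ℝ) = ((n + 1).choose (i + 1) : ℝ) / (n + 1) := by
      intro i
      have h := Nat.add_one_mul_choose_eq n i
      have h' : ((n : ℝ) + 1) * n.choose i = (n + 1).choose (i + 1) * (i + 1) := by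
        exact_mod_cast h
      push_cast
      field_simp
      linarith [h']
    -- alternating sum of binomials vanishes
    have halt0 : ∑ m ∈ range (n + 2), (-1 : ℝ) ^ m * ((n + 1).choose m : ℝ) = 0 := by
      have := Int.alternating_sum_range_choose_of_ne (Nat.succ_ne_zero n)
      exact_mod_cast congrArg (fun z : ℤ => (z : ℝ)) this
    -- LHS over range (n+2), drop the 0 term
    rw [Finset.sum_range_succ']
    rw [show (-1 : ℝ) ^ 0 * ((n + 1).choose 0 : ℝ) / ((0 : ℕ) : ℝ) = 0 by simp, add_zero]
    have hsplit : ∀ i : ℕ, (-1 : ℝ) ^ (i + 1) * ((n + 1).choose (i + 1) : ℝ) / ((i + 1 : ℕ) : ℝ)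
        = (-1 : ℝ) ^ (i + 1) * (n.choose i : ℝ) / ((i + 1 : ℕ) : ℝ)
          + (-1 : ℝ) ^ (i + 1) * (n.choose (i + 1) : ℝ) / ((i + 1 : ℕ) : ℝ) := by
      intro i
      rw [Nat.choose_succ_succ' (n) (i)]
      push_cast
      ring
    rw [Finset.sum_congr rfl (fun i _ => hsplit i), Finset.sum_add_distrib]
    -- second sum equals LHS(n)
    have hS2 : ∑ i ∈ range (n + 1), (-1 : ℝ) ^ (i + 1) * (n.choose (i + 1) : ℝ) / ((i + 1 : ℕ) : ℝ)
        = ∑ i ∈ range (n + 1), (-1 : ℝ) ^ i * n.choose i / i := by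
      rw [Finset.sum_range_succ (fun i => (-1 : ℝ) ^ (i + 1) * (n.choose (i + 1) : ℝ) / ((i + 1 : ℕ) : ℝ))]
      rw [Nat.choose_succ_self]
      rw [Finset.sum_range_succ' (fun i => (-1 : ℝ) ^ i * (n.choose i : ℝ) / i)]
      simp
    -- first sum equals -1/(n+1)
    have hS1 : ∑ i ∈ range (n + 1), (-1 : ℝ) ^ (i + 1) * (n.choose i : ℝ) / ((i + 1 : ℕ) : ℝ)
        = -1 / (n + 1) := by
      have : ∀ i : ℕ, (-1 : ℝ) ^ (i + 1) * (n.choose i : ℝ) / ((i + 1 : ℕ) : ℝ)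
          = ((-1 : ℝ) ^ (i + 1) * ((n + 1).choose (i + 1) : ℝ)) / (n + 1) := by
        intro i
        rw [mul_div_assoc, hstep i, mul_div_assoc]
      rw [Finset.sum_congr rfl (fun i _ => this i), ← Finset.sum_div]
      have : ∑ i ∈ range (n + 1), (-1 : ℝ) ^ (i + 1) * ((n + 1).choose (i + 1) : ℝ) = -1 := by
        have h0 := halt0
        rw [Finset.sum_range_succ' (fun m => (-1 : ℝ) ^ m * ((n + 1).choose m : ℝ))] at h0
        simp only [pow_zero, Nat.choose_zero_right, Nat.cast_one, one_mul] at h0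
        linarith
      rw [this]
    rw [hS1, hS2, ih]
    have hIcc : ∑ j ∈ Finset.Icc 1 (n + 1), (1 : ℝ) / j
        = (∑ j ∈ Finset.Icc 1 n, (1 : ℝ) / j) + 1 / (n + 1) := by
      rw [← Finset.Ico_add_one_right_eq_Icc, Finset.sum_Ico_succ_top (by omega), Finset.Ico_add_one_right_eq_Icc]
      push_cast
      ring
    rw [hIcc]
    push_cast
    ring


lemma sum_L (a b : ℕ) :
    ∑ i ∈ range (a + 1), ∑ j ∈ range (b + 1), L a b i j =
      -(∑ j ∈ Finset.Icc 1 b, (1 : ℝ) / j) - ∑ j ∈ Finset.Icc 1 a, (1 : ℝ) / j := by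
  -- inner sum for i = 0
  have hinner0 : ∑ j ∈ range (b + 1), L a b 0 j
      = ∑ j ∈ range b, (-1 : ℝ) ^ (b - j) * b.choose j / ((b - j : ℕ) : ℝ) := by
    rw [Finset.sum_range_succ]
    have : L a b 0 b = 0 := by simp [L]
    rw [this, add_zero]
    refine Finset.sum_congr rfl fun j hj => ?_
    have hjb : j ≠ b := by simp at hj; omega
    simp [L, hjb]
  -- inner sum for i ≠ 0
  have hinner : ∀ i : ℕ, i ≠ 0 → ∑ j ∈ range (b + 1), L a b i j
      = (-1 : ℝ) ^ i * a.choose i / i := by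
    intro i hi
    have : ∀ j ∈ range (b + 1), L a b i j = if j = b then (-1 : ℝ) ^ i * a.choose i / i else 0 := by
      intro j _
      by_cases hjb : j = b <;> simp [L, hjb, hi]
    rw [Finset.sum_congr rfl this, Finset.sum_ite_eq' (range (b + 1)) b
      (fun _ => (-1 : ℝ) ^ i * a.choose i / i)]
    simp
  -- reflected sum equals -H b
  have hrefl : ∑ j ∈ range b, (-1 : ℝ) ^ (b - j) * b.choose j / ((b - j : ℕ) : ℝ)
      = -∑ j ∈ Finset.Icc 1 b, (1 : ℝ) / j := by
    rw [← Finset.sum_range_reflect (fun j => (-1 : ℝ) ^ (b - j) * b.choose j / ((b - j : ℕ) : ℝ)) b]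
    have : ∀ j ∈ range b, (-1 : ℝ) ^ (b - (b - 1 - j)) * b.choose (b - 1 - j) / ((b - (b - 1 - j) : ℕ) : ℝ)
        = (-1 : ℝ) ^ (j + 1) * b.choose (j + 1) / ((j + 1 : ℕ) : ℝ) := by
      intro j hj
      simp only [Finset.mem_range] at hj
      have h1 : b - (b - 1 - j) = j + 1 := by omega
      have h2 : b.choose (b - 1 - j) = b.choose (j + 1) := by
        rw [show b - 1 - j = b - (j + 1) by omega, Nat.choose_symm (by omega)]
      rw [h1, h2]
    rw [Finset.sum_congr rfl this]
    have := halt b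
    rw [Finset.sum_range_succ' (fun i => (-1 : ℝ) ^ i * b.choose i / ((i : ℕ) : ℝ))] at this
    simp only [pow_zero, Nat.choose_zero_right, Nat.cast_one, one_mul, Nat.cast_zero,
      div_zero, add_zero] at this
    exact this
  -- outer sum
  rw [Finset.sum_range_succ' (fun i => ∑ j ∈ range (b + 1), L a b i j)]
  rw [hinner0, hrefl]
  have : ∀ i ∈ range a, ∑ j ∈ range (b + 1), L a b (i + 1) j
      = (-1 : ℝ) ^ (i + 1) * a.choose (i + 1) / ((i + 1 : ℕ) : ℝ) := by
    intro i _
    rw [hinner (i + 1) (Nat.succ_ne_zero i)]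
  rw [Finset.sum_congr rfl this]
  have h2 : ∑ i ∈ range a, (-1 : ℝ) ^ (i + 1) * a.choose (i + 1) / ((i + 1 : ℕ) : ℝ)
      = -∑ j ∈ Finset.Icc 1 a, (1 : ℝ) / j := by
    have := halt a
    rw [Finset.sum_range_succ' (fun i => (-1 : ℝ) ^ i * a.choose i / ((i : ℕ) : ℝ))] at this
    simp only [pow_zero, Nat.choose_zero_right, Nat.cast_one, one_mul, Nat.cast_zero,
      div_zero, add_zero] at this
    exact this
  rw [h2]
  ring


lemma integrand_eq (a b : ℕ) {x u : ℝ} (hxu : x - u ≠ 0) :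
    (1 + u) ^ a * (1 - u) ^ b / (x - u) ^ (b + 1) =
      ∑ i ∈ range (a + 1), ∑ j ∈ range (b + 1),
        cf a b i j x * (x - u) ^ ((i : ℤ) + j - (b + 1)) := by
  have h1 : (1 + u) ^ a
      = ∑ i ∈ range (a + 1), (-1 : ℝ) ^ i * (x - u) ^ i * (1 + x) ^ (a - i) * a.choose i := by
    have := add_pow (-(x - u)) (1 + x) a
    have harg : -(x - u) + (1 + x) = 1 + u := by ring
    rw [harg] at this
    rw [this]
    refine Finset.sum_congr rfl fun i _ => ?_
    rw [neg_pow]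
    try ring
  have h2 : (1 - u) ^ b
      = ∑ j ∈ range (b + 1), (x - u) ^ j * (1 - x) ^ (b - j) * b.choose j := by
    have := add_pow (x - u) (1 - x) b
    have harg : (x - u) + (1 - x) = 1 - u := by ring
    rw [harg] at this
    rw [this]
  rw [h1, h2, Finset.sum_mul_sum, Finset.sum_div]
  refine Finset.sum_congr rfl fun i hi => ?_
  rw [Finset.sum_div]
  refine Finset.sum_congr rfl fun j hj => ?_
  rw [div_eq_iff (pow_ne_zero (b + 1) hxu)]
  have hstep : cf a b i j x * (x - u) ^ ((i : ℤ) + j - (b + 1)) * (x - u) ^ (b + 1)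
      = cf a b i j x * ((x - u) ^ i * (x - u) ^ j) := by
    rw [← zpow_natCast (x - u) (b + 1), ← zpow_natCast (x - u) i, ← zpow_natCast (x - u) j,
      mul_assoc, ← zpow_add₀ hxu, ← zpow_add₀ hxu]
    norm_num
  rw [hstep, cf]
  push_cast
  ring


lemma sub_ne_on {x : ℝ} (hx : 1 < x) {u : ℝ} (hu : u ∈ Set.uIcc (-1 : ℝ) 1) : x - u ≠ 0 := by
  rw [Set.uIcc_of_le (by norm_num)] at hu
  have := hu.2
  intro h
  linarith


lemma integrable_term {x : ℝ} (hx : 1 < x) (c : ℝ) (m : ℤ) :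
    IntervalIntegrable (fun u => c * (x - u) ^ m) volume (-1 : ℝ) 1 := by
  apply ContinuousOn.intervalIntegrable
  apply ContinuousOn.mul continuousOn_const
  apply ContinuousOn.zpow₀ ((continuous_const.sub continuous_id).continuousOn) m
  intro u hu
  exact Or.inl (sub_ne_on hx hu)


set_option maxHeartbeats 1000000 in
lemma integral_eq (a b : ℕ) {x : ℝ} (hx : 1 < x) :
    (∫ u in (-1 : ℝ)..1, (1 + u) ^ a * (1 - u) ^ b / (x - u) ^ (b + 1)) =
      ∑ i ∈ range (a + 1), ∑ j ∈ range (b + 1), cf a b i j x * gf b i j x := by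
  have key : Set.EqOn (fun u : ℝ => (1 + u) ^ a * (1 - u) ^ b / (x - u) ^ (b + 1))
      (fun u : ℝ => ∑ p ∈ (range (a + 1)) ×ˢ (range (b + 1)),
          cf a b p.1 p.2 x * (x - u) ^ ((p.1 : ℤ) + p.2 - (b + 1)))
      (Set.uIcc (-1 : ℝ) 1) := by
    intro u hu
    simp only
    rw [integrand_eq a b (sub_ne_on hx hu), ← Finset.sum_product']
  have h1 : (∫ u in (-1 : ℝ)..1, (1 + u) ^ a * (1 - u) ^ b / (x - u) ^ (b + 1)) =
      ∫ u in (-1 : ℝ)..1, ∑ p ∈ (range (a + 1)) ×ˢ (range (b + 1)),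
          cf a b p.1 p.2 x * (x - u) ^ ((p.1 : ℤ) + p.2 - (b + 1)) :=
    intervalIntegral.integral_congr key
  refine h1.trans ?_
  rw [intervalIntegral.integral_finset_sum (μ := volume) (a := (-1 : ℝ)) (b := (1 : ℝ))
      (s := (range (a + 1)) ×ˢ (range (b + 1)))
      (f := fun p u => cf a b p.1 p.2 x * (x - u) ^ ((p.1 : ℤ) + p.2 - (b + 1)))
      (fun p _ => integrable_term hx (cf a b p.1 p.2 x) ((p.1 : ℤ) + p.2 - (b + 1)))]
  rw [← Finset.sum_product']
  refine Finset.sum_congr rfl fun p _ => ?_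
  rw [intervalIntegral.integral_const_mul, elem_int hx]
  congr 1
  rw [gf]
  have he : (p.1 : ℤ) + p.2 - (b + 1) + 1 = (p.1 : ℤ) + p.2 - b := by ring
  rw [he]
  split_ifs with h
  · rfl
  · congr 1
    push_cast
    ring


lemma two_zpow_cancel (a : ℕ) : (2 : ℝ) ^ (-(a : ℤ)) * 2 ^ a = 1 := by
  rw [← zpow_natCast (2 : ℝ) a, ← zpow_add₀ (two_ne_zero (α := ℝ))]
  simp


lemma term_tendsto (a b : ℕ) {i j : ℕ} (hi : i ≤ a) (hj : j ≤ b) :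
    Filter.Tendsto (fun x : ℝ => (2 : ℝ) ^ (-(a : ℤ)) * (cf a b i j x * gf b i j x)
        - (if i = 0 ∧ j = b then Real.log ((x + 1) / (x - 1)) else 0))
      (nhdsWithin 1 (Set.Ioi 1)) (nhds (L a b i j)) := by
  by_cases he : (i : ℤ) + j - b = 0
  · -- log case
    by_cases hi0 : i = 0
    · -- i = 0, j = b : leading term
      have hjb : j = b := by omega
      subst hjb; subst hi0
      have hL : L a j 0 j = 0 := by simp [L]
      rw [hL]
      have hP : Filter.Tendsto
          (fun x : ℝ => (2 : ℝ) ^ (-(a : ℤ)) * ∑ m ∈ range a, (1 + x) ^ m * 2 ^ (a - 1 - m))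
          (nhdsWithin 1 (Set.Ioi 1))
          (nhds ((2 : ℝ) ^ (-(a : ℤ)) * ∑ m ∈ range a, (1 + 1 : ℝ) ^ m * 2 ^ (a - 1 - m))) := by
        exact ((Continuous.tendsto (by continuity) 1)).mono_left nhdsWithin_le_nhds
      have h2 := hP.mul tendsto_sub_log
      rw [mul_zero] at h2
      refine h2.congr fun x => ?_
      have hg : (∑ m ∈ range a, (1 + x) ^ m * 2 ^ (a - 1 - m)) * ((1 + x) - 2)
          = (1 + x) ^ a - 2 ^ a := geom_sum₂_mul (1 + x) 2 a
      have hx2 := two_zpow_cancel a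
      have hcf : cf a j 0 j x = (1 + x) ^ a := by simp [cf]
      have hgf : gf j 0 j x = Real.log ((x + 1) / (x - 1)) := by
        rw [gf, if_pos he]
      rw [hcf, hgf, if_pos ⟨rfl, rfl⟩]
      calc ((2 : ℝ) ^ (-(a : ℤ)) * ∑ m ∈ range a, (1 + x) ^ m * 2 ^ (a - 1 - m))
            * ((x - 1) * Real.log ((x + 1) / (x - 1)))
          = (2 : ℝ) ^ (-(a : ℤ)) * ((∑ m ∈ range a, (1 + x) ^ m * 2 ^ (a - 1 - m)) * ((1 + x) - 2))
            * Real.log ((x + 1) / (x - 1)) := by ring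
        _ = (2 : ℝ) ^ (-(a : ℤ)) * ((1 + x) ^ a - 2 ^ a) * Real.log ((x + 1) / (x - 1)) := by
            rw [hg]
        _ = (2 : ℝ) ^ (-(a : ℤ)) * ((1 + x) ^ a * Real.log ((x + 1) / (x - 1)))
            - ((2 : ℝ) ^ (-(a : ℤ)) * 2 ^ a) * Real.log ((x + 1) / (x - 1)) := by ring
        _ = (2 : ℝ) ^ (-(a : ℤ)) * ((1 + x) ^ a * Real.log ((x + 1) / (x - 1)))
            - Real.log ((x + 1) / (x - 1)) := by rw [hx2]; ring
    · -- i ≠ 0, i + j = b, j < b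
      have hjb : j ≠ b := by omega
      have hL : L a b i j = 0 := by simp [L, hjb, hi0]
      rw [hL]
      have hA : Filter.Tendsto
          (fun x : ℝ => (2 : ℝ) ^ (-(a : ℤ)) * ((a.choose i : ℝ) * b.choose j * (-1) ^ i
            * (1 + x) ^ (a - i)))
          (nhdsWithin 1 (Set.Ioi 1))
          (nhds ((2 : ℝ) ^ (-(a : ℤ)) * ((a.choose i : ℝ) * b.choose j * (-1) ^ i
            * (1 + 1) ^ (a - i)))) :=
        ((Continuous.tendsto (by continuity) 1)).mono_left nhdsWithin_le_nhds
      have hB := key1 (b - j) (by omega)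
      have h2 := hA.mul hB
      rw [mul_zero] at h2
      refine h2.congr fun x => ?_
      rw [cf, gf, if_pos he, if_neg (by tauto)]
      ring
  · -- power case
    have hcond : ¬(i = 0 ∧ j = b) := by
      rintro ⟨rfl, rfl⟩; simp at he
    -- limit of the uniform reformulation
    have hA : Filter.Tendsto
        (fun x : ℝ => (2 : ℝ) ^ (-(a : ℤ)) * (a.choose i : ℝ) * b.choose j * (-1) ^ i
          * (1 + x) ^ (a - i))
        (nhdsWithin 1 (Set.Ioi 1))
        (nhds ((2 : ℝ) ^ (-(a : ℤ)) * (a.choose i : ℝ) * b.choose j * (-1) ^ i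
          * (2 : ℝ) ^ (a - i))) := by
      have := ((Continuous.tendsto (by continuity :
        Continuous fun x : ℝ => (2 : ℝ) ^ (-(a : ℤ)) * (a.choose i : ℝ) * b.choose j * (-1) ^ i
          * (1 + x) ^ (a - i)) 1)).mono_left
        (nhdsWithin_le_nhds (s := Set.Ioi (1 : ℝ)))
      norm_num at this ⊢
      exact this
    have hB : Filter.Tendsto
        (fun x : ℝ => (1 - x) ^ (b - j) * (x + 1) ^ ((i : ℤ) + j - b))
        (nhdsWithin 1 (Set.Ioi 1))
        (nhds ((0 : ℝ) ^ (b - j) * (2 : ℝ) ^ ((i : ℤ) + j - b))) := by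
      have h1 : Filter.Tendsto (fun x : ℝ => (1 - x) ^ (b - j)) (nhds 1)
          (nhds ((1 - 1 : ℝ) ^ (b - j))) :=
        Continuous.tendsto (by continuity) 1
      have h2 : Filter.Tendsto (fun x : ℝ => (x + 1) ^ ((i : ℤ) + j - b)) (nhds 1)
          (nhds ((1 + 1 : ℝ) ^ ((i : ℤ) + j - b))) := by
        apply ContinuousAt.tendsto
        exact ContinuousAt.zpow₀ (by fun_prop) _ (Or.inl (by norm_num))
      have := (h1.mul h2).mono_left (nhdsWithin_le_nhds (s := Set.Ioi (1 : ℝ)))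
      norm_num at this ⊢
      convert this using 2 <;> norm_num
    have hC : Filter.Tendsto
        (fun x : ℝ => (-1 : ℝ) ^ (b - j) * (x - 1) ^ ((i : ℤ)))
        (nhdsWithin 1 (Set.Ioi 1))
        (nhds ((-1 : ℝ) ^ (b - j) * (0 : ℝ) ^ i)) := by
      have : Filter.Tendsto (fun x : ℝ => (-1 : ℝ) ^ (b - j) * (x - 1) ^ i) (nhds 1)
          (nhds ((-1 : ℝ) ^ (b - j) * ((1 : ℝ) - 1) ^ i)) :=
        Continuous.tendsto (by continuity) 1
      have h' := this.mono_left (nhdsWithin_le_nhds (s := Set.Ioi (1 : ℝ)))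
      simp only [sub_self] at h'
      refine h'.congr fun x => ?_
      rw [zpow_natCast]
    have hF := hA.mul ((hB.sub hC).div_const (((i : ℤ) + j - b : ℤ) : ℝ))
    -- pointwise equality on Ioi 1
    have heq : ∀ᶠ x in nhdsWithin 1 (Set.Ioi (1 : ℝ)),
        ((2 : ℝ) ^ (-(a : ℤ)) * (a.choose i : ℝ) * b.choose j * (-1) ^ i * (1 + x) ^ (a - i))
          * (((1 - x) ^ (b - j) * (x + 1) ^ ((i : ℤ) + j - b)
              - (-1 : ℝ) ^ (b - j) * (x - 1) ^ ((i : ℤ))) / (((i : ℤ) + j - b : ℤ) : ℝ))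
        = (2 : ℝ) ^ (-(a : ℤ)) * (cf a b i j x * gf b i j x)
          - (if i = 0 ∧ j = b then Real.log ((x + 1) / (x - 1)) else 0) := by
      filter_upwards [self_mem_nhdsWithin] with x hx
      have hx1 : (1 : ℝ) < x := hx
      have hxne : x - 1 ≠ 0 := by simp; linarith
      have hkey : (1 - x) ^ (b - j) * (x - 1) ^ ((i : ℤ) + j - b)
          = (-1 : ℝ) ^ (b - j) * (x - 1) ^ ((i : ℤ)) := by
        have h1 : (1 - x : ℝ) ^ (b - j) = (-1 : ℝ) ^ (b - j) * (x - 1) ^ (b - j) := by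
          rw [show (1 - x : ℝ) = -(x - 1) by ring, neg_pow]
        rw [h1, mul_assoc]
        congr 1
        rw [← zpow_natCast (x - 1) (b - j), ← zpow_add₀ hxne]
        congr 1
        omega
      rw [if_neg hcond, sub_zero, cf, gf, if_neg he]
      rw [← hkey]
      ring
    have := hF.congr' heq
    convert this using 2
    rw [eq_comm]
    -- now compute the limit value = L a b i j
    by_cases hjb : j = b
    · subst hjb
      have hine : i ≠ 0 := by omega
      have hL : L a j i j = (-1 : ℝ) ^ i * a.choose i / i := by simp [L, hine]
      rw [hL]
      have hee : (i : ℤ) + j - j = (i : ℤ) := by ring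
      rw [hee]
      have h0 : (0 : ℝ) ^ (j - j) = 1 := by simp
      have h0' : (0 : ℝ) ^ i = 0 := by simp [hine]
      rw [h0, h0', Nat.sub_self]
      simp only [Nat.choose_self, Nat.cast_one]
      have hpow : (2 : ℝ) ^ (-(a : ℤ)) * (2 : ℝ) ^ (a - i) * (2 : ℝ) ^ ((i : ℤ)) = 1 := by
        rw [← zpow_natCast (2 : ℝ) (a - i), ← zpow_add₀ (two_ne_zero (α := ℝ)),
          ← zpow_add₀ (two_ne_zero (α := ℝ))]
        rw [show -(a : ℤ) + ((a - i : ℕ) : ℤ) + (i : ℤ) = 0 by omega]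
        simp
      calc (2 : ℝ) ^ (-(a : ℤ)) * (a.choose i : ℝ) * 1 * (-1) ^ i * (2 : ℝ) ^ (a - i)
            * ((1 * (2 : ℝ) ^ ((i : ℤ)) - (-1 : ℝ) ^ (0 : ℕ) * 0) / (((i : ℤ) : ℝ)))
          = ((2 : ℝ) ^ (-(a : ℤ)) * (2 : ℝ) ^ (a - i) * (2 : ℝ) ^ ((i : ℤ)))
            * ((-1) ^ i * (a.choose i : ℝ) / i) := by push_cast; ring
        _ = (-1 : ℝ) ^ i * a.choose i / i := by rw [hpow]; ring
    · by_cases hi0 : i = 0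
      · subst hi0
        have hL : L a b 0 j = (-1 : ℝ) ^ (b - j) * b.choose j / ((b - j : ℕ) : ℝ) := by
          simp [L, hjb]
        rw [hL]
        have h0 : (0 : ℝ) ^ (b - j) = 0 := by
          have : b - j ≠ 0 := by omega
          simp [this]
        have h00 : (0 : ℝ) ^ (0 : ℕ) = 1 := by norm_num
        rw [h0, h00, Nat.sub_zero]
        simp only [Nat.choose_zero_right, Nat.cast_one]
        have hbj : ((b - j : ℕ) : ℝ) = (b : ℝ) - j := by push_cast [hj]; ring
        have hbj0 : ((b : ℝ) - j) ≠ 0 := by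
          have : (j : ℝ) < b := by exact_mod_cast lt_of_le_of_ne hj hjb
          linarith
        have hee : (((0 : ℕ) : ℤ) + j - b : ℤ) = (j : ℤ) - b := by push_cast; ring
        rw [hee]
        have hcast : (((j : ℤ) - b : ℤ) : ℝ) = (j : ℝ) - b := by push_cast; ring
        rw [hcast, hbj]
        rw [show ((j : ℝ) - (b : ℝ)) = -((b : ℝ) - j) from by ring, div_neg]
        have hpow := two_zpow_cancel a
        calc (2 : ℝ) ^ (-(a : ℤ)) * (1 : ℝ) * b.choose j * (-1 : ℝ) ^ (0 : ℕ)
              * (2 : ℝ) ^ a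
              * -((0 * (2 : ℝ) ^ ((j : ℤ) - b) - (-1 : ℝ) ^ (b - j) * 1) / ((b : ℝ) - j))
            = ((2 : ℝ) ^ (-(a : ℤ)) * 2 ^ a) * ((b.choose j : ℝ)
              * ((-1 : ℝ) ^ (b - j) / ((b : ℝ) - j))) := by push_cast; ring
          _ = (-1 : ℝ) ^ (b - j) * b.choose j / ((b : ℝ) - j) := by rw [hpow]; ring
      · have hL : L a b i j = 0 := by simp [L, hjb, hi0]
        rw [hL]
        have h1 : (0 : ℝ) ^ (b - j) = 0 := by
          have : b - j ≠ 0 := by omega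
          simp [this]
        have h2 : (0 : ℝ) ^ i = 0 := by simp [hi0]
        rw [h1, h2]
        ring

lemma chi_sum (a b : ℕ) (r : ℝ) :
    ∑ i ∈ range (a + 1), ∑ j ∈ range (b + 1), (if i = 0 ∧ j = b then r else 0) = r := by
  rw [Finset.sum_eq_single 0]
  · rw [Finset.sum_eq_single b]
    · simp
    · intro j _ hjb; simp [hjb]
    · intro hb; exact absurd (Finset.self_mem_range_succ b) hb
  · intro i _ hi0
    apply Finset.sum_eq_zero
    intro j _
    simp [hi0]
  · intro h0
    exact absurd (Finset.mem_range.mpr (Nat.succ_pos a)) h0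

lemma main (a b : ℕ) :
    Tendsto (fun x : ℝ =>
        (2 : ℝ) ^ (-(a : ℤ)) *
            (∫ u in (-1 : ℝ)..1, (1 + u) ^ a * (1 - u) ^ b / (x - u) ^ (b + 1))
          - Real.log ((x + 1) / (x - 1)) +
          ((∑ j ∈ Finset.Icc 1 b, (1 : ℝ) / j) + ∑ j ∈ Finset.Icc 1 a, (1 : ℝ) / j))
      (nhdsWithin 1 (Set.Ioi 1)) (nhds 0) := by
  have hsum : Tendsto (fun x : ℝ => ∑ i ∈ range (a + 1), ∑ j ∈ range (b + 1),
      ((2 : ℝ) ^ (-(a : ℤ)) * (cf a b i j x * gf b i j x)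
        - (if i = 0 ∧ j = b then Real.log ((x + 1) / (x - 1)) else 0)))
      (nhdsWithin 1 (Set.Ioi 1)) (nhds (∑ i ∈ range (a + 1), ∑ j ∈ range (b + 1), L a b i j)) := by
    apply tendsto_finset_sum
    intro i hi
    apply tendsto_finset_sum
    intro j hj
    exact term_tendsto a b (Finset.mem_range_succ_iff.mp hi) (Finset.mem_range_succ_iff.mp hj)
  have h2 := hsum.add_const ((∑ j ∈ Finset.Icc 1 b, (1 : ℝ) / j) + ∑ j ∈ Finset.Icc 1 a, (1 : ℝ) / j)
  have h3 : (∑ i ∈ range (a + 1), ∑ j ∈ range (b + 1), L a b i j) +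
      ((∑ j ∈ Finset.Icc 1 b, (1 : ℝ) / j) + ∑ j ∈ Finset.Icc 1 a, (1 : ℝ) / j) = 0 := by
    rw [sum_L]
    ring
  rw [h3] at h2
  refine h2.congr' ?_
  filter_upwards [self_mem_nhdsWithin] with x hx
  have hx1 : (1 : ℝ) < x := hx
  congr 1
  rw [integral_eq a b hx1]
  simp only [Finset.sum_sub_distrib]
  rw [chi_sum a b (Real.log ((x + 1) / (x - 1)))]
  congr 1
  rw [Finset.mul_sum]
  refine Finset.sum_congr rfl fun i _ => ?_
  rw [Finset.mul_sum]

end S6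

/-- For `0 ≤ t ≤ k-1`, as `x → 1⁺`,
`Q_{k,t}(x) = log((x+1)/(x-1)) - ((ψ(k+t) - ψ(1)) + (ψ(k-t) - ψ(1))) + o(1)`, where
`ψ(n) - ψ(1) = Σ_{j=1}^{n-1} 1/j`. -/
theorem statement6 (k t : ℕ) (hk : 1 ≤ k) (ht : t ≤ k - 1) :
    Filter.Tendsto
      (fun x : ℝ => Qkt k t x - Real.log ((x + 1) / (x - 1)) +
        ((∑ j ∈ Finset.Icc 1 (k + t - 1), (1 : ℝ) / j) +
          ∑ j ∈ Finset.Icc 1 (k - t - 1), (1 : ℝ) / j))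
      (nhdsWithin 1 (Set.Ioi 1)) (nhds 0) := by
  have htk : t + 1 ≤ k := by omega
  have h1 : k + t = (k + t - 1) + 1 := by omega
  have h2 : ((t : ℤ) + 1 - (k : ℤ)) = -((k - t - 1 : ℕ) : ℤ) := by
    have : ((k - t - 1 : ℕ) : ℤ) = (k : ℤ) - t - 1 := by omega
    omega
  have := S6.main (k - t - 1) (k + t - 1)
  refine this.congr (fun x => ?_)
  rw [Qkt, h2, ← h1]
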